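/- Let K be a number field, v ∈ M_K a place of K, and F = (F₀,F₁,F₂) a triple of homogeneous polynomials of common degree λ ≥ 2 in K[x₀,x₁,x₂]. Let a ∈ K³ be such that a_k := F^k(a) ≠ 0 for every k ≥ 0 (where F^k denotes the k-fold composition of the induced map F : K³ → K³). Then there is a real constant B (depending on F, v and a but not on n) such that for every n ≥ 0 one has ∑_{k=0}^{n-1} λ^{-k} ( (1/λ)·log‖F(a_k)‖_v − log‖a_k‖_v ) ≥ −B; in particular the series ∑_{k≥0} λ^{-k} ( (1/λ)·log‖F(a_k)‖_v − log‖a_k‖_v ) does not diverge to −∞. -/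

import Mathlib

open MvPolynomial Filter
noncomputable def polyMap {K : Type*} [Field K] (P : Fin 3 → MvPolynomial (Fin 3) K) :
    (Fin 3 → K) → (Fin 3 → K) :=
  fun a i => eval a (P i)

noncomputable def vNorm {K : Type*} [Field K] (v : AbsoluteValue K ℝ) (b : Fin 3 → K) : ℝ :=
  max (v (b 0)) (max (v (b 1)) (v (b 2)))

namespace BDaux

variable {K : Type*} [Field K]

lemma vNorm_nonneg (v : AbsoluteValue K ℝ) (b : Fin 3 → K) : 0 ≤ vNorm v b :=
  le_trans (v.nonneg _) (le_max_left _ _)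

lemma apply_le_vNorm (v : AbsoluteValue K ℝ) (b : Fin 3 → K) (i : Fin 3) :
    v (b i) ≤ vNorm v b := by
  fin_cases i
  · exact le_max_left _ _
  · exact le_trans (le_max_left _ _) (le_max_right _ _)
  · exact le_trans (le_max_right _ _) (le_max_right _ _)

lemma vNorm_pos (v : AbsoluteValue K ℝ) {b : Fin 3 → K} (hb : b ≠ 0) : 0 < vNorm v b := by
  obtain ⟨i, hi⟩ := Function.ne_iff.mp hb
  exact lt_of_lt_of_le (v.pos hi) (apply_le_vNorm v b i)

lemma abv_sum_le_of_nonarch (v : AbsoluteValue K ℝ)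
    (hna : ∀ x y : K, v (x + y) ≤ max (v x) (v y))
    {α : Type*} (s : Finset α) (f : α → K) {C : ℝ} (hC : 0 ≤ C)
    (h : ∀ x ∈ s, v (f x) ≤ C) : v (∑ x ∈ s, f x) ≤ C := by
  classical
  induction s using Finset.induction_on with
  | empty => simpa using hC
  | insert _ _ hx ih =>
      rw [Finset.sum_insert hx]
      exact le_trans (hna _ _) (max_le (h _ (Finset.mem_insert_self _ _))
        (ih fun x hxs => h x (Finset.mem_insert_of_mem hxs)))

lemma prod_pow_le (v : AbsoluteValue K ℝ) (b : Fin 3 → K) (d : Fin 3 →₀ ℕ) :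
    ∏ i, v (b i) ^ d i ≤ vNorm v b ^ (∑ i, d i) := by
  rw [← Finset.prod_pow_eq_pow_sum]
  exact Finset.prod_le_prod (fun i _ => pow_nonneg (v.nonneg _) _)
    (fun i _ => pow_le_pow_left₀ (v.nonneg _) (apply_le_vNorm v b i) _)

lemma sum_d_eq {lam : ℕ} {p : MvPolynomial (Fin 3) K} (hp : p.IsHomogeneous lam)
    {d : Fin 3 →₀ ℕ} (hd : MvPolynomial.coeff d p ≠ 0) : ∑ i, d i = lam := by
  have h := hp hd
  rw [Finsupp.weight_apply] at h
  simp only [Pi.one_apply, smul_eq_mul, mul_one, Finsupp.sum] at h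
  rw [← h]
  exact (Finset.sum_subset (Finset.subset_univ _) fun i _ hi =>
    Finsupp.notMem_support_iff.mp hi).symm

lemma abv_term (v : AbsoluteValue K ℝ) (b : Fin 3 → K) (c : K) (d : Fin 3 →₀ ℕ) :
    v (c * ∏ i, b i ^ d i) = v c * ∏ i, v (b i) ^ d i := by
  rw [v.map_mul]
  congr 1
  rw [map_prod v]
  simp [map_pow]

lemma eval_le_sum (v : AbsoluteValue K ℝ) {lam : ℕ} {p : MvPolynomial (Fin 3) K}
    (hp : p.IsHomogeneous lam) (b : Fin 3 → K) :
    v (eval b p) ≤ (∑ d ∈ p.support, v (p.coeff d)) * vNorm v b ^ lam := by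
  rw [MvPolynomial.eval_eq']
  refine le_trans (v.sum_le _ _) ?_
  rw [Finset.sum_mul]
  refine Finset.sum_le_sum fun d hd => ?_
  rw [abv_term]
  refine mul_le_mul_of_nonneg_left ?_ (v.nonneg _)
  rw [← sum_d_eq hp (MvPolynomial.mem_support_iff.mp hd)]
  exact prod_pow_le v b d

lemma eval_le_nonarch (v : AbsoluteValue K ℝ)
    (hna : ∀ x y : K, v (x + y) ≤ max (v x) (v y))
    {lam : ℕ} {p : MvPolynomial (Fin 3) K} (hp : p.IsHomogeneous lam)
    (hcoef : ∀ d, v (p.coeff d) ≤ 1) (b : Fin 3 → K) :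
    v (eval b p) ≤ vNorm v b ^ lam := by
  rw [MvPolynomial.eval_eq']
  refine abv_sum_le_of_nonarch v hna _ _ (pow_nonneg (vNorm_nonneg v b) _) fun d hd => ?_
  rw [abv_term]
  calc v (p.coeff d) * ∏ i, v (b i) ^ d i
      ≤ 1 * vNorm v b ^ lam := by
        refine mul_le_mul (hcoef d) ?_ (Finset.prod_nonneg fun i _ => pow_nonneg (v.nonneg _) _)
          zero_le_one
        rw [← sum_d_eq hp (MvPolynomial.mem_support_iff.mp hd)]
        exact prod_pow_le v b d
    _ = vNorm v b ^ lam := one_mul _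

end BDaux

open BDaux

theorem stmt_0 {K : Type*} [Field K] [NumberField K]
    {ι : Type*} (M : ι → AbsoluteValue K ℝ)
    (hnontriv : ∀ w : ι, ∃ x : K, x ≠ 0 ∧ M w x ≠ 1)
    (hfin : ∀ c : K, c ≠ 0 → (Function.support fun w => Real.log (M w c)).Finite)
    (hprod : ∀ c : K, c ≠ 0 → ∑ᶠ w : ι, Real.log (M w c) = 0)
    (harch : {w : ι | ¬ ∀ x y : K, M w (x + y) ≤ max (M w x) (M w y)}.Finite)
    (v : ι)
    (lam : ℕ) (hlam : 2 ≤ lam)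
    (P : Fin 3 → MvPolynomial (Fin 3) K)
    (hhom : ∀ i, (P i).IsHomogeneous lam)
    (a : Fin 3 → K)
    (ha : ∀ k : ℕ, (polyMap P)^[k] a ≠ 0) :
    ∃ B : ℝ, ∀ n : ℕ,
      -B ≤ ∑ k ∈ Finset.range n,
        ((lam : ℝ)⁻¹) ^ k *
          ((1 / (lam : ℝ)) * Real.log (vNorm (M v) (polyMap P ((polyMap P)^[k] a)))
            - Real.log (vNorm (M v) ((polyMap P)^[k] a))) := by
  classical
  have hlamR : (2:ℝ) ≤ (lam:ℝ) := by exact_mod_cast hlam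
  have hlampos : (0:ℝ) < (lam:ℝ) := lt_of_lt_of_le two_pos hlamR
  -- multiplicative constant at each place
  set Cm : ι → ℝ := fun w => 1 + ∑ i : Fin 3, ∑ d ∈ (P i).support, M w ((P i).coeff d) with hCmdef
  have hCm1 : ∀ w, 1 ≤ Cm w := by
    intro w
    have : 0 ≤ ∑ i : Fin 3, ∑ d ∈ (P i).support, M w ((P i).coeff d) :=
      Finset.sum_nonneg fun i _ => Finset.sum_nonneg fun d _ => (M w).nonneg _
    simp only [hCmdef]; linarith
  have hCmpos : ∀ w, 0 < Cm w := fun w => lt_of_lt_of_le one_pos (hCm1 w)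
  -- any-place step bound
  have hstepmul : ∀ w (b : Fin 3 → K),
      vNorm (M w) (polyMap P b) ≤ Cm w * vNorm (M w) b ^ lam := by
    intro w b
    have hb : ∀ i : Fin 3, M w (eval b (P i)) ≤ Cm w * vNorm (M w) b ^ lam := by
      intro i
      refine le_trans (eval_le_sum (M w) (hhom i) b) ?_
      refine mul_le_mul_of_nonneg_right ?_ (pow_nonneg (vNorm_nonneg _ _) _)
      have h1 : ∑ d ∈ (P i).support, M w ((P i).coeff d)
          ≤ ∑ j : Fin 3, ∑ d ∈ (P j).support, M w ((P j).coeff d) :=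
        Finset.single_le_sum (f := fun j => ∑ d ∈ (P j).support, M w ((P j).coeff d))
          (fun j _ => Finset.sum_nonneg fun d _ => (M w).nonneg _) (Finset.mem_univ i)
      simp only [hCmdef]; linarith
    exact max_le (hb 0) (max_le (hb 1) (hb 2))
  -- good places
  set Good : ι → Prop := fun w => (∀ x y : K, M w (x + y) ≤ max (M w x) (M w y)) ∧
      ∀ i : Fin 3, ∀ d, M w ((P i).coeff d) ≤ 1 with hGooddef
  set c : ι → ℝ := fun w => if Good w then 0 else Real.log (Cm w) with hcdef
  have hc0 : ∀ w, 0 ≤ c w := by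
    intro w
    simp only [hcdef]
    split
    · exact le_rfl
    · exact Real.log_nonneg (hCm1 w)
  -- one-step log bound
  have hstep : ∀ w (b : Fin 3 → K), b ≠ 0 → polyMap P b ≠ 0 →
      Real.log (vNorm (M w) (polyMap P b)) ≤ c w + (lam:ℝ) * Real.log (vNorm (M w) b) := by
    intro w b hb hFb
    have hbpos := vNorm_pos (M w) hb
    have hFbpos := vNorm_pos (M w) hFb
    by_cases hg : Good w
    · have hbd : vNorm (M w) (polyMap P b) ≤ vNorm (M w) b ^ lam := by
        have hco : ∀ i : Fin 3, M w (eval b (P i)) ≤ vNorm (M w) b ^ lam := fun i =>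
          eval_le_nonarch (M w) hg.1 (hhom i) (hg.2 i) b
        exact max_le (hco 0) (max_le (hco 1) (hco 2))
      have := Real.log_le_log hFbpos hbd
      rw [Real.log_pow] at this
      simp only [hcdef, if_pos hg]
      linarith
    · have hbd := hstepmul w b
      have := Real.log_le_log hFbpos hbd
      rw [Real.log_mul (ne_of_gt (hCmpos w)) (ne_of_gt (pow_pos hbpos lam)),
        Real.log_pow] at this
      simp only [hcdef, if_neg hg]
      linarith
  -- finiteness of support of c
  have hcfin : (Function.support c).Finite := by
    have hsub : Function.support c ⊆
        {w : ι | ¬ ∀ x y : K, M w (x + y) ≤ max (M w x) (M w y)} ∪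
        ⋃ (i : Fin 3), ⋃ (d ∈ (P i).support),
          Function.support fun w => Real.log (M w ((P i).coeff d)) := by
      intro w hw
      have hng : ¬ Good w := by
        intro hg
        apply hw
        simp only [hcdef, if_pos hg]
      rcases Classical.em (∀ x y : K, M w (x + y) ≤ max (M w x) (M w y)) with hna | hna
      · have hex : ¬ ∀ i : Fin 3, ∀ d, M w ((P i).coeff d) ≤ 1 := fun h => hng ⟨hna, h⟩
        push_neg at hex
        obtain ⟨i, d, hid⟩ := hex
        have hid : ¬ M w ((P i).coeff d) ≤ 1 := not_le.mpr hid
        have hcoeff : (P i).coeff d ≠ 0 := by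
          intro h0
          rw [h0] at hid
          simp at hid
        refine Set.mem_union_right _ ?_
        refine Set.mem_iUnion.mpr ⟨i, Set.mem_iUnion.mpr ⟨d, Set.mem_iUnion.mpr
          ⟨MvPolynomial.mem_support_iff.mpr hcoeff, ?_⟩⟩⟩
        have : (1:ℝ) < M w ((P i).coeff d) := lt_of_not_ge hid
        exact ne_of_gt (Real.log_pos this)
      · exact Set.mem_union_left _ hna
    refine Set.Finite.subset (Set.Finite.union harch ?_) hsub
    refine Set.finite_iUnion fun i => ?_
    refine Set.Finite.biUnion (Finset.finite_toSet _) fun d hd => ?_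
    exact hfin _ (MvPolynomial.mem_support_iff.mp hd)
  -- log norms along the orbit
  set L : ι → ℕ → ℝ := fun w n => Real.log (vNorm (M w) ((polyMap P)^[n] a)) with hLdef
  set m : ι → ℝ := fun w => max 0 (Real.log (vNorm (M w) a)) with hmdef
  have hm0 : ∀ w, 0 ≤ m w := fun w => le_max_left _ _
  have ha' : ∀ k : ℕ, polyMap P ((polyMap P)^[k] a) ≠ 0 := by
    intro k
    have h := ha (k + 1)
    rwa [Function.iterate_succ_apply'] at h
  have hgrow : ∀ w n, L w n ≤ (∑ j ∈ Finset.range n, (lam:ℝ)^j) * c w + (lam:ℝ)^n * m w := by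
    intro w n
    induction n with
    | zero => simp [hLdef, hmdef]
    | succ n ih =>
        have h1 : L w (n+1) ≤ c w + (lam:ℝ) * L w n := by
          simp only [hLdef, Function.iterate_succ_apply']
          exact hstep w _ (ha n) (ha' n)
        have h2 : (lam:ℝ) * L w n ≤ (lam:ℝ) *
            ((∑ j ∈ Finset.range n, (lam:ℝ)^j) * c w + (lam:ℝ)^n * m w) :=
          mul_le_mul_of_nonneg_left ih (le_of_lt hlampos)
        have h3 : ∑ j ∈ Finset.range (n+1), (lam:ℝ)^j
            = (lam:ℝ) * ∑ j ∈ Finset.range n, (lam:ℝ)^j + 1 := geom_sum_succ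
        rw [h3]
        rw [pow_succ']
        nlinarith [hc0 w]
  have hgeo : ∀ n : ℕ, (∑ j ∈ Finset.range n, (lam:ℝ)^j) ≤ (lam:ℝ)^n := by
    intro n
    induction n with
    | zero => simp
    | succ n ih =>
        rw [Finset.sum_range_succ, pow_succ]
        have hpow : (0:ℝ) ≤ (lam:ℝ)^n := le_of_lt (pow_pos hlampos n)
        nlinarith
  set g : ι → ℝ := fun w => c w + m w with hgdef
  have hg0 : ∀ w, 0 ≤ g w := fun w => add_nonneg (hc0 w) (hm0 w)
  have hgrow2 : ∀ w n, L w n ≤ (lam:ℝ)^n * g w := by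
    intro w n
    refine le_trans (hgrow w n) ?_
    have := mul_le_mul_of_nonneg_right (hgeo n) (hc0 w)
    simp only [hgdef]
    nlinarith [pow_pos hlampos n, hm0 w]
  -- finiteness of support of g
  have hmfin : (Function.support m).Finite := by
    have hsub : Function.support m ⊆
        ⋃ i : Fin 3, {w : ι | a i ≠ 0 ∧ Real.log (M w (a i)) ≠ 0} := by
      intro w hw
      by_contra hcon
      apply hw
      simp only [Set.mem_iUnion, Set.mem_setOf_eq, not_exists, not_and, not_not] at hcon
      have hle : ∀ i : Fin 3, M w (a i) ≤ 1 := by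
        intro i
        by_cases h0 : a i = 0
        · rw [h0]; simp
        · have hlog := hcon i h0
          have hpos := (M w).pos h0
          rcases Real.log_eq_zero.mp hlog with h | h | h
          · exact absurd h (ne_of_gt hpos)
          · exact le_of_eq h
          · exact absurd h (by linarith)
      have hnorm : vNorm (M w) a ≤ 1 := max_le (hle 0) (max_le (hle 1) (hle 2))
      have : Real.log (vNorm (M w) a) ≤ 0 := Real.log_nonpos (vNorm_nonneg _ _) hnorm
      simp only [hmdef]
      exact max_eq_left this
    refine Set.Finite.subset (Set.finite_iUnion fun i => ?_) hsub
    by_cases h0 : a i = 0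
    · simp [h0]
    · exact Set.Finite.subset (hfin _ h0) fun w hw => hw.2
  have hgfin : (Function.support g).Finite := by
    refine Set.Finite.subset (hcfin.union hmfin) ?_
    intro w hw
    by_contra hcon
    simp only [Set.mem_union, Function.mem_support, not_or, not_not] at hcon
    apply hw
    simp only [hgdef, hcon.1, hcon.2, add_zero]
  set T : Finset ι := hgfin.toFinset with hTdef
  set D : ℝ := ∑ w ∈ T.erase v, g w with hDdef
  -- product-formula lower bound on L v n
  have hlow : ∀ n : ℕ, -((lam:ℝ)^n * D) ≤ L v n := by
    intro n
    obtain ⟨i₀, hi₀⟩ := Function.ne_iff.mp (ha n)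
    set c0 : K := (polyMap P)^[n] a i₀ with hc0def
    have hc0ne : c0 ≠ 0 := hi₀
    set S : Finset ι := (hfin c0 hc0ne).toFinset ∪ T ∪ {v} with hSdef
    have hvS : v ∈ S := by simp [hSdef]
    have hsum0 : ∑ w ∈ S, Real.log (M w c0) = 0 := by
      rw [← finsum_eq_sum_of_support_subset _ (s := S)]
      · exact hprod c0 hc0ne
      · intro w hw
        simp only [hSdef, Finset.coe_union, Set.mem_union]
        left; left
        simpa using hw
    have hv_eq : Real.log (M v c0) = -∑ w ∈ S.erase v, Real.log (M w c0) := by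
      have := Finset.add_sum_erase S (fun w => Real.log (M w c0)) hvS
      rw [hsum0] at this
      linarith
    -- termwise bounds
    have hterm : ∀ w ∈ S.erase v, Real.log (M w c0) ≤ L w n := by
      intro w _
      exact Real.log_le_log ((M w).pos hc0ne) (apply_le_vNorm (M w) _ i₀)
    have hsum1 : ∑ w ∈ S.erase v, Real.log (M w c0) ≤ ∑ w ∈ S.erase v, (lam:ℝ)^n * g w :=
      Finset.sum_le_sum fun w hw => le_trans (hterm w hw) (hgrow2 w n)
    have hsum2 : ∑ w ∈ S.erase v, g w ≤ D := by
      have hsub1 : S.erase v ⊆ (S.erase v) ∪ (T.erase v) := Finset.subset_union_left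
      have h1 : ∑ w ∈ S.erase v, g w ≤ ∑ w ∈ (S.erase v) ∪ (T.erase v), g w :=
        Finset.sum_le_sum_of_subset_of_nonneg hsub1 fun w _ _ => hg0 w
      have h2 : ∑ w ∈ (S.erase v) ∪ (T.erase v), g w = ∑ w ∈ T.erase v, g w := by
        refine (Finset.sum_subset Finset.subset_union_right ?_).symm
        intro x hx hxT
        have hxv : x ≠ v := by
          rcases Finset.mem_union.mp hx with h | h
          · exact (Finset.mem_erase.mp h).1
          · exact (Finset.mem_erase.mp h).1
        have : x ∉ T := fun hxt => hxT (Finset.mem_erase.mpr ⟨hxv, hxt⟩)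
        have : x ∉ Function.support g := by
          rwa [hTdef, Set.Finite.mem_toFinset] at this
        exact Function.notMem_support.mp this
      rw [hDdef]; linarith
    have hL : Real.log (M v c0) ≤ L v n :=
      Real.log_le_log ((M v).pos hc0ne) (apply_le_vNorm (M v) _ i₀)
    have hmul : ∑ w ∈ S.erase v, (lam:ℝ)^n * g w = (lam:ℝ)^n * ∑ w ∈ S.erase v, g w :=
      (Finset.mul_sum _ _ _).symm
    have hpn : (0:ℝ) ≤ (lam:ℝ)^n := le_of_lt (pow_pos hlampos n)
    rw [hv_eq] at hL
    have : (lam:ℝ)^n * (∑ w ∈ S.erase v, g w) ≤ (lam:ℝ)^n * D :=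
      mul_le_mul_of_nonneg_left hsum2 hpn
    rw [hmul] at hsum1
    linarith
  -- telescoping
  refine ⟨D + L v 0, ?_⟩
  intro n
  have htel : ∑ k ∈ Finset.range n,
      ((lam : ℝ)⁻¹) ^ k *
        ((1 / (lam : ℝ)) * Real.log (vNorm (M v) (polyMap P ((polyMap P)^[k] a)))
          - Real.log (vNorm (M v) ((polyMap P)^[k] a)))
      = ((lam:ℝ)⁻¹)^n * L v n - ((lam:ℝ)⁻¹)^0 * L v 0 := by
    rw [← Finset.sum_range_sub (fun k => ((lam:ℝ)⁻¹)^k * L v k) n]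
    refine Finset.sum_congr rfl fun k _ => ?_
    have hit : polyMap P ((polyMap P)^[k] a) = (polyMap P)^[k+1] a :=
      (Function.iterate_succ_apply' _ _ _).symm
    rw [hit]
    simp only [hLdef]
    have hne : (lam:ℝ) ≠ 0 := ne_of_gt hlampos
    field_simp
    have h1 : (lam:ℝ) * (1 / (lam:ℝ)) = 1 := by field_simp
    linear_combination (-(1 / (lam:ℝ)) ^ k * Real.log (vNorm (M v) ((polyMap P)^[k + 1] a))) * h1
  rw [htel]
  have hfn : -D ≤ ((lam:ℝ)⁻¹)^n * L v n := by
    have h1 := mul_le_mul_of_nonneg_left (hlow n)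
      (le_of_lt (pow_pos (inv_pos.mpr hlampos) n))
    have h2 : ((lam:ℝ)⁻¹)^n * -((lam:ℝ)^n * D) = -D := by
      rw [← mul_neg]
      rw [← mul_assoc]
      rw [← mul_pow]
      rw [inv_mul_cancel₀ (ne_of_gt hlampos)]
      simp
    rw [h2] at h1
    exact h1
  simp only [pow_zero, one_mul]
  linarith
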